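/- Let A be the Grassmann (exterior) algebra over a field F of characteristic ≠ 2 with two generators u, v (so A has basis 1, u, v, uv with u² = v² = 0 and uv = −vu), and let λ: A → F be the algebra homomorphism giving the scalar component. Define T(x) = x + λ(x)u and S(x) = x + 2λ(x)u. Then S and T are linear, T is bijective, S(x²) = T(x)² for all x ∈ A, but T(1) = 1 + u is not central, so T is not a weighted Jordan homomorphism. -/

import Mathlib

open ExteriorAlgebra

section aux

variable (F : Type*) [Field F]

noncomputable def stmt16U : Matrix (Fin 4) (Fin 4) F :=
  !![0,0,0,0; 1,0,0,0; 0,0,0,0; 0,0,1,0]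

noncomputable def stmt16V : Matrix (Fin 4) (Fin 4) F :=
  !![0,0,0,0; 0,0,0,0; 1,0,0,0; 0,-1,0,0]

lemma stmt16_UU : stmt16U F * stmt16U F = 0 := by
  ext i j
  fin_cases i <;> fin_cases j <;>
    simp [stmt16U, Matrix.mul_apply, Fin.sum_univ_four, Matrix.vecHead, Matrix.vecTail]

lemma stmt16_VV : stmt16V F * stmt16V F = 0 := by
  ext i j
  fin_cases i <;> fin_cases j <;>
    simp [stmt16V, Matrix.mul_apply, Fin.sum_univ_four, Matrix.vecHead, Matrix.vecTail]

lemma stmt16_UVVU : stmt16U F * stmt16V F + stmt16V F * stmt16U F = 0 := by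
  ext i j
  fin_cases i <;> fin_cases j <;>
    simp [stmt16U, stmt16V, Matrix.mul_apply, Fin.sum_univ_four, Matrix.vecHead, Matrix.vecTail]

lemma stmt16_UV30 : (stmt16U F * stmt16V F) 3 0 = 1 := by
  simp [stmt16U, stmt16V, Matrix.mul_apply, Fin.sum_univ_four, Matrix.vecHead, Matrix.vecTail]

noncomputable def stmt16f : (Fin 2 → F) →ₗ[F] Matrix (Fin 4) (Fin 4) F where
  toFun m := m 0 • stmt16U F + m 1 • stmt16V F
  map_add' m n := by simp [add_smul]; abel
  map_smul' a m := by simp [smul_smul, smul_add]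

lemma stmt16f_sq (m : Fin 2 → F) : stmt16f F m * stmt16f F m = 0 := by
  have h : stmt16f F m = m 0 • stmt16U F + m 1 • stmt16V F := rfl
  rw [h, add_mul, mul_add, mul_add, smul_mul_smul_comm, smul_mul_smul_comm,
    smul_mul_smul_comm, smul_mul_smul_comm, stmt16_UU, stmt16_VV, smul_zero, smul_zero]
  have : (m 0 * m 1) • (stmt16U F * stmt16V F) + (m 1 * m 0) • (stmt16V F * stmt16U F)
      = (m 0 * m 1) • (stmt16U F * stmt16V F + stmt16V F * stmt16U F) := by
    rw [smul_add, mul_comm (m 1)]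
  rw [zero_add, add_zero, this, stmt16_UVVU, smul_zero]

lemma stmt16_uv_ne_zero :
    ExteriorAlgebra.ι F (Pi.single 0 1) * ExteriorAlgebra.ι F (Pi.single 1 1) ≠ (0 : ExteriorAlgebra F (Fin 2 → F)) := by
  intro h
  have hφ := congrArg (ExteriorAlgebra.lift F ⟨stmt16f F, stmt16f_sq F⟩) h
  rw [_root_.map_mul, map_zero, ExteriorAlgebra.lift_ι_apply, ExteriorAlgebra.lift_ι_apply] at hφ
  have h0 : stmt16f F (Pi.single 0 1) = stmt16U F := by
    have : stmt16f F (Pi.single 0 1)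
        = (Pi.single 0 1 : Fin 2 → F) 0 • stmt16U F + (Pi.single 0 1 : Fin 2 → F) 1 • stmt16V F := rfl
    rw [this]; simp
  have h1 : stmt16f F (Pi.single 1 1) = stmt16V F := by
    have : stmt16f F (Pi.single 1 1)
        = (Pi.single 1 1 : Fin 2 → F) 0 • stmt16U F + (Pi.single 1 1 : Fin 2 → F) 1 • stmt16V F := rfl
    rw [this]; simp
  rw [h0, h1] at hφ
  have := congrFun (congrFun hφ 3) 0
  rw [stmt16_UV30] at this
  simp at this

end aux

set_option maxHeartbeats 1000000 in
theorem stmt16 {F : Type*} [Field F] (hch : (2 : F) ≠ 0) :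
    let A := ExteriorAlgebra F (Fin 2 → F)
    let u : A := ExteriorAlgebra.ι F (Pi.single 0 1)
    let lam : A → F := ExteriorAlgebra.algebraMapInv
    let T : A → A := fun x => x + lam x • u
    let S : A → A := fun x => x + (2 * lam x) • u
    (∀ x y : A, T (x + y) = T x + T y) ∧ (∀ (a : F) (x : A), T (a • x) = a • T x) ∧
    (∀ x y : A, S (x + y) = S x + S y) ∧ (∀ (a : F) (x : A), S (a • x) = a • S x) ∧
    Function.Bijective T ∧
    (∀ x : A, S (x ^ 2) = (T x) ^ 2) ∧
    T 1 = 1 + u ∧ T 1 ∉ Set.center A := by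
  intro A u lam T S
  have lam_def : ∀ x : A, lam x = ExteriorAlgebra.algebraMapInv x := fun _ => rfl
  set v : A := ExteriorAlgebra.ι F (Pi.single 1 1) with hv
  set w : A := u * v with hw
  have lam_add : ∀ x y : A, lam (x + y) = lam x + lam y := fun x y => map_add _ x y
  have lam_smul : ∀ (a : F) (x : A), lam (a • x) = a * lam x := fun a x => by
    rw [lam_def, _root_.map_smul, smul_eq_mul]
  have lam_mul : ∀ x y : A, lam (x * y) = lam x * lam y := fun x y => map_mul _ x y
  have lam_sub : ∀ x y : A, lam (x - y) = lam x - lam y := fun x y =>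
    map_sub ExteriorAlgebra.algebraMapInv x y
  have lam_one : lam (1 : A) = 1 := map_one ExteriorAlgebra.algebraMapInv
  have lam_alg : ∀ r : F, lam (algebraMap F A r) = r := fun r =>
    ExteriorAlgebra.algebraMap_leftInverse _ r
  have lam_ι : ∀ m : Fin 2 → F, lam (ExteriorAlgebra.ι F m) = 0 := fun m => by
    rw [lam_def, ExteriorAlgebra.algebraMapInv, ExteriorAlgebra.lift_ι_apply]; rfl
  have uu : u * u = 0 := ExteriorAlgebra.ι_sq_zero _
  have vv : v * v = 0 := ExteriorAlgebra.ι_sq_zero _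
  have vu : v * u = -w := by
    have h := ExteriorAlgebra.ι_add_mul_swap (R := F) (Pi.single 0 1 : Fin 2 → F) (Pi.single 1 1)
    rw [add_comm] at h
    rw [hw]
    exact eq_neg_of_add_eq_zero_left h
  have key : ∀ x : A, ∃ c : F, u * x = lam x • u + c • w ∧ x * u = lam x • u - c • w ∧
      x * w = lam x • w ∧ w * x = lam x • w := by
    intro x
    induction x using ExteriorAlgebra.induction with
    | algebraMap r =>
      refine ⟨0, ?_, ?_, ?_, ?_⟩ <;>
        simp [lam_alg, Algebra.smul_def, Algebra.commutes,
          (show ∀ r : F, lam (algebraMap F (ExteriorAlgebra F (Fin 2 → F)) r) = r from lam_alg),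
          (show ∀ r : F, algebraMap F (ExteriorAlgebra F (Fin 2 → F)) r = algebraMap F A r from fun _ => rfl)]
    | ι m =>
      have hm : ExteriorAlgebra.ι F m = m 0 • u + m 1 • v := by
        have h1 : m = m 0 • (Pi.single 0 1 : Fin 2 → F) + m 1 • (Pi.single 1 1 : Fin 2 → F) := by
          ext i; fin_cases i <;> simp [Pi.single_apply]
        conv_lhs => rw [h1]
        rw [_root_.map_add, LinearMap.map_smul, LinearMap.map_smul]
      have huw : u * w = 0 := by rw [hw, ← mul_assoc, uu, zero_mul]
      have hvw : v * w = 0 := by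
        rw [hw, ← mul_assoc, vu, neg_mul, hw, mul_assoc, vv, mul_zero, neg_zero]
      have hwu : w * u = 0 := by
        rw [hw, mul_assoc, vu, hw, mul_neg, ← mul_assoc, uu, zero_mul, neg_zero]
      have hwv : w * v = 0 := by rw [hw, mul_assoc, vv, mul_zero]
      refine ⟨m 1, ?_, ?_, ?_, ?_⟩ <;> rw [lam_ι]
      · rw [hm, mul_add, mul_smul_comm, mul_smul_comm, uu, smul_zero, zero_add, zero_smul,
          zero_add, hw]
      · rw [hm, add_mul, smul_mul_assoc, smul_mul_assoc, uu, smul_zero, zero_add, vu,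
          zero_smul, zero_sub, smul_neg]
      · rw [hm, add_mul, smul_mul_assoc, smul_mul_assoc, huw, hvw, smul_zero, smul_zero,
          add_zero, zero_smul]
      · rw [hm, mul_add, mul_smul_comm, mul_smul_comm, hwu, hwv, smul_zero, smul_zero,
          add_zero, zero_smul]
    | mul a b ha hb =>
      obtain ⟨c, h1, h2, h3, h4⟩ := ha
      obtain ⟨d, k1, k2, k3, k4⟩ := hb
      refine ⟨lam a * d + c * lam b, ?_, ?_, ?_, ?_⟩ <;> rw [lam_mul]
      · rw [← mul_assoc, h1, add_mul, smul_mul_assoc, smul_mul_assoc, k1, k4]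
        module
      · rw [mul_assoc, k2, mul_sub, mul_smul_comm, mul_smul_comm, h2, h3]
        module
      · rw [mul_assoc, k3, mul_smul_comm, h3]
        module
      · rw [← mul_assoc, h4, smul_mul_assoc, k4]
        module
    | add a b ha hb =>
      obtain ⟨c, h1, h2, h3, h4⟩ := ha
      obtain ⟨d, k1, k2, k3, k4⟩ := hb
      refine ⟨c + d, ?_, ?_, ?_, ?_⟩ <;> rw [lam_add]
      · rw [mul_add, h1, k1]; module
      · rw [add_mul, h2, k2]; module
      · rw [add_mul, h3, k3]; module
      · rw [mul_add, h4, k4]; module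
  have anti : ∀ x : A, x * u + u * x = (2 * lam x) • u := by
    intro x
    obtain ⟨c, h1, h2, _, _⟩ := key x
    rw [h1, h2, two_mul, add_smul]
    abel
  refine ⟨fun x y => ?_, fun a x => ?_, fun x y => ?_, fun a x => ?_, ?_, fun x => ?_, ?_, ?_⟩
  · show x + y + lam (x + y) • u = x + lam x • u + (y + lam y • u)
    rw [lam_add, add_smul]; abel
  · show a • x + lam (a • x) • u = a • (x + lam x • u)
    rw [lam_smul, smul_add, mul_smul]
  · show x + y + (2 * lam (x + y)) • u = x + (2 * lam x) • u + (y + (2 * lam y) • u)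
    rw [lam_add, mul_add, add_smul]; abel
  · show a • x + (2 * lam (a • x)) • u = a • (x + (2 * lam x) • u)
    rw [lam_smul, smul_add, ← mul_assoc, mul_comm 2 a, mul_assoc, mul_smul]
  · -- bijective
    have lam_u : lam u = 0 := lam_ι _
    refine Function.bijective_iff_has_inverse.mpr ⟨fun x => x - lam x • u, fun x => ?_, fun x => ?_⟩
    · show x + lam x • u - lam (x + lam x • u) • u = x
      rw [lam_add, lam_smul, lam_u, mul_zero, add_zero]
      abel
    · show x - lam x • u + lam (x - lam x • u) • u = x
      rw [lam_sub, lam_smul, lam_u, mul_zero, sub_zero]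
      show x - lam x • u + lam x • u = x
      abel
  · -- S (x^2) = T x ^ 2
    show x ^ 2 + (2 * lam (x ^ 2)) • u = (x + lam x • u) ^ 2
    have hx := anti x
    rw [pow_two, pow_two, add_mul, mul_add, mul_add]
    simp only [smul_mul_assoc, mul_smul_comm, smul_smul, uu, smul_zero, add_zero]
    rw [add_assoc, ← smul_add, hx, smul_smul, lam_mul]
    have hs : lam x * (2 * lam x) = 2 * (lam x * lam x) := by ring
    rw [hs]
  · show (1 : A) + lam 1 • u = 1 + u
    rw [lam_one, one_smul]
  · intro hc
    have hcomm : T 1 * v = v * T 1 := (Set.mem_center_iff.mp hc).comm v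
    have hcomm' : ((1 : A) + lam 1 • u) * v = v * ((1 : A) + lam 1 • u) := hcomm
    rw [lam_one, one_smul, add_mul, mul_add, one_mul, mul_one] at hcomm'
    have h2 : u * v = v * u := add_left_cancel hcomm'
    rw [vu, ← hw] at h2
    have h3 : (2 : F) • w = 0 := by
      have : w + w = 0 := by
        nth_rewrite 1 [h2]
        abel
      rw [two_smul]
      exact_mod_cast this
    rcases smul_eq_zero.mp h3 with h | h
    · exact hch h
    · exact stmt16_uv_ne_zero (F := F) (by rw [← hw]; exact h)
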